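/- Let P = f·λ_d be a Borel probability measure on ℝ^d, let r > 0 with ∫ |x|^r dP(x) < ∞, and let (α_n)_{n≥1} be a sequence of finite codebooks such that ∫ d(x,α_n)^r dP(x) → 0 as n → ∞. Let θ > 0 and μ ∈ ℝ^d be such that (θ,μ) is P-admissible and hypothesis (H1) holds. Then for every p ∈ (0,1) and every b > 0, the function ψ_b^p is locally P_{θ,μ}-integrable, i.e. ∫_K ψ_b^p dP_{θ,μ} < ∞ for every compact set K ⊂ ℝ^d. -/

import Mathlib

open MeasureTheory ENNReal Filter Set Metric Topology
open scoped Classical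

noncomputable section

/-- Distance from a point `x` to a finite codebook `α`. -/
def qdist {d : ℕ} (x : EuclideanSpace ℝ (Fin d)) (α : Finset (EuclideanSpace ℝ (Fin d))) : ℝ :=
  Metric.infDist x (α : Set (EuclideanSpace ℝ (Fin d)))

/-- The `r`-th power `L^r` quantization error `∫ d(x,α)^r dP` of a codebook `α`. -/
def qerr {d : ℕ} (P : Measure (EuclideanSpace ℝ (Fin d))) (r : ℝ)
    (α : Finset (EuclideanSpace ℝ (Fin d))) : ℝ≥0∞ :=
  ∫⁻ x, ENNReal.ofReal (qdist x α) ^ r ∂P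

/-- The optimal `n`-level `L^r` quantization error `e_{n,r}(P)`. -/
def enr {d : ℕ} (P : Measure (EuclideanSpace ℝ (Fin d))) (r : ℝ) (n : ℕ) : ℝ≥0∞ :=
  ⨅ (α : Finset (EuclideanSpace ℝ (Fin d))) (_ : α.Nonempty) (_ : α.card ≤ n),
    qerr P r α ^ (1 / r)

/-- The uniform distribution on the unit cube `[0,1]^d`. -/
def unifCube (d : ℕ) : Measure (EuclideanSpace ℝ (Fin d)) :=
  volume.restrict {x | ∀ i, x i ∈ Icc (0 : ℝ) 1}

/-- The constant `J_{r,d} = inf_{n ≥ 1} n^{r/d} e_{n,r}(U([0,1]^d))^r`. -/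
def Jrd (r : ℝ) (d : ℕ) : ℝ≥0∞ :=
  ⨅ (n : ℕ) (_ : 1 ≤ n), (n : ℝ≥0∞) ^ (r / (d : ℝ)) * enr (unifCube d) r n ^ r

/-- Zador's constant `Q_r(P)` for a measure whose a.c. part has density `f`. -/
def Qr {d : ℕ} (f : EuclideanSpace ℝ (Fin d) → ℝ) (r : ℝ) : ℝ≥0∞ :=
  Jrd r d * (∫⁻ x, ENNReal.ofReal (f x) ^ ((d : ℝ) / ((d : ℝ) + r))) ^ (((d : ℝ) + r) / (d : ℝ))

/-- The dilated/contracted codebook `α^{θ,μ} = μ + θ(α - μ)`. -/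
def dilate {d : ℕ} (α : Finset (EuclideanSpace ℝ (Fin d))) (θ : ℝ)
    (μ : EuclideanSpace ℝ (Fin d)) : Finset (EuclideanSpace ℝ (Fin d)) :=
  α.image fun a => μ + θ • (a - μ)

/-- `f_{θ,μ}(x) = f(μ + θ(x-μ))`. -/
def fdil {d : ℕ} (f : EuclideanSpace ℝ (Fin d) → ℝ) (θ : ℝ)
    (μ x : EuclideanSpace ℝ (Fin d)) : ℝ :=
  f (μ + θ • (x - μ))

/-- The image measure `P_{θ,μ}` of `P` under `x ↦ (x-μ)/θ + μ`. -/
def Pdil {d : ℕ} (P : Measure (EuclideanSpace ℝ (Fin d))) (θ : ℝ)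
    (μ : EuclideanSpace ℝ (Fin d)) : Measure (EuclideanSpace ℝ (Fin d)) :=
  Measure.map (fun x => μ + θ⁻¹ • (x - μ)) P

/-- `(θ,μ)` is `P`-admissible for `P = f·λ_d`:
`{f>0} ⊆ μ(1-θ) + θ{f>0}` up to a `λ_d`-null set.  (Note that
`x ∈ μ(1-θ) + θ{f>0}` iff `f((x-μ)/θ + μ) > 0`.) -/
def Admissible {d : ℕ} (f : EuclideanSpace ℝ (Fin d) → ℝ) (θ : ℝ)
    (μ : EuclideanSpace ℝ (Fin d)) : Prop :=
  ∀ᵐ x ∂(volume : Measure (EuclideanSpace ℝ (Fin d))),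
    0 < f x → 0 < f (μ + θ⁻¹ • (x - μ))

/-- The maximal function `ψ_b` attached to `P` and the sequence of codebooks `α`. -/
def maxFun {d : ℕ} (P : Measure (EuclideanSpace ℝ (Fin d)))
    (α : ℕ → Finset (EuclideanSpace ℝ (Fin d))) (b : ℝ)
    (x : EuclideanSpace ℝ (Fin d)) : ℝ≥0∞ :=
  ⨆ (n : ℕ) (_ : 1 ≤ n),
    volume (Metric.ball x (b * qdist x (α n))) / P (Metric.ball x (b * qdist x (α n)))

/-- An `L^r(P)`-optimal sequence of `n`-quantizers. -/
def OptimalSeq {d : ℕ} (P : Measure (EuclideanSpace ℝ (Fin d))) (r : ℝ)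
    (α : ℕ → Finset (EuclideanSpace ℝ (Fin d))) : Prop :=
  ∀ n, 1 ≤ n → (α n).Nonempty ∧ (α n).card ≤ n ∧ qerr P r (α n) = enr P r n ^ r

/-- An asymptotically `L^r(P)`-optimal sequence of quantizers,
for `P` whose a.c. part has density `f`. -/
def AsympOptimalSeq {d : ℕ} (P : Measure (EuclideanSpace ℝ (Fin d)))
    (f : EuclideanSpace ℝ (Fin d) → ℝ) (r : ℝ)
    (α : ℕ → Finset (EuclideanSpace ℝ (Fin d))) : Prop :=
  (∀ n, 1 ≤ n → (α n).Nonempty ∧ (α n).card ≤ n) ∧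
  Tendsto (fun n : ℕ => (n : ℝ≥0∞) ^ (r / (d : ℝ)) * qerr P r (α n)) atTop (𝓝 (Qr f r))

/-- `L^s(P)`-rate-optimality of a sequence of codebooks. -/
def RateOptimal {d : ℕ} (P : Measure (EuclideanSpace ℝ (Fin d))) (s : ℝ)
    (β : ℕ → Finset (EuclideanSpace ℝ (Fin d))) : Prop :=
  limsup (fun n : ℕ => (n : ℝ≥0∞) ^ (s / (d : ℝ)) * qerr P s (β n)) atTop < ⊤

/-- The support of a measure. -/
def msupp {d : ℕ} (P : Measure (EuclideanSpace ℝ (Fin d))) : Set (EuclideanSpace ℝ (Fin d)) :=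
  {x | ∀ ε > 0, 0 < P (Metric.ball x ε)}

/-- Hypothesis (H1): for every `M > 0`,
`sup { f(μ+θ(z-μ))/f(z) : z ∈ B(0,M), f(z) > 0 } < ∞`. -/
def H1 {d : ℕ} (f : EuclideanSpace ℝ (Fin d) → ℝ) (θ : ℝ)
    (μ : EuclideanSpace ℝ (Fin d)) : Prop :=
  ∀ M > (0 : ℝ), ∃ C : ℝ, ∀ z ∈ Metric.ball (0 : EuclideanSpace ℝ (Fin d)) M,
    0 < f z → f (μ + θ • (z - μ)) / f z ≤ C

/-- Hypothesis (H2). -/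
def H2 {d : ℕ} (P : Measure (EuclideanSpace ℝ (Fin d))) (θ : ℝ)
    (μ : EuclideanSpace ℝ (Fin d)) (s r : ℝ) : Prop :=
  ∃ b ∈ Ioo (0 : ℝ) (1 / 2), ∃ M > (0 : ℝ),
    (∫⁻ x in {x : EuclideanSpace ℝ (Fin d) | M < ‖x‖},
      (⨆ t ∈ Ioc (0 : ℝ) (2 * b * ‖x‖),
        volume (Metric.ball x t) / P (Metric.ball x t)) ^ (s / ((d : ℝ) + r))
      ∂(Pdil P θ μ)) < ⊤

/-- Hypothesis (H3): `λ_d(· ∩ supp P) ≪ P` and `supp P` is a finite union of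
closed convex sets. -/
def H3 {d : ℕ} (P : Measure (EuclideanSpace ℝ (Fin d))) : Prop :=
  volume.restrict (msupp P) ≪ P ∧
  ∃ (k : ℕ) (C : Fin k → Set (EuclideanSpace ℝ (Fin d))),
    (∀ i, IsClosed (C i) ∧ Convex ℝ (C i)) ∧ msupp P = ⋃ i, C i


section AuxLemmas

variable {d : ℕ}

lemma lsc_measure_ball (P : Measure (EuclideanSpace ℝ (Fin d))) :
    LowerSemicontinuous fun q : (EuclideanSpace ℝ (Fin d)) × ℝ => P (Metric.ball q.1 q.2) := by
  rintro ⟨x, t⟩ c hc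
  dsimp only at hc ⊢
  rcases le_or_gt t 0 with ht | ht
  · rw [Metric.ball_eq_empty.2 ht] at hc
    simp at hc
  · have hU : Metric.ball x t = ⋃ n : ℕ, Metric.closedBall x (t - 1 / (n + 1)) := by
      ext y
      simp only [mem_ball, mem_iUnion, mem_closedBall]
      constructor
      · intro hy
        obtain ⟨n, hn⟩ := exists_nat_one_div_lt (sub_pos.2 hy)
        exact ⟨n, by linarith⟩
      · rintro ⟨n, hn⟩
        have h1 : (0:ℝ) < 1 / (n + 1) := by positivity
        linarith
    have hdir : Directed (· ⊆ ·) fun n : ℕ => Metric.closedBall x (t - 1 / (n + 1)) := by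
      refine (Monotone.directed_le ?_)
      intro n m hnm
      apply Metric.closedBall_subset_closedBall
      have : (1:ℝ) / (m + 1) ≤ 1 / (n + 1) := by
        apply one_div_le_one_div_of_le (by positivity) (by exact_mod_cast by omega)
      linarith
    rw [hU, hdir.measure_iUnion] at hc
    obtain ⟨n, hn⟩ := lt_iSup_iff.1 hc
    set ε : ℝ := 1 / (n + 1) with hε
    have hε0 : 0 < ε := by positivity
    have hmem : Metric.ball ((x, t) : (EuclideanSpace ℝ (Fin d)) × ℝ) (ε/2) ∈
        𝓝 ((x, t) : (EuclideanSpace ℝ (Fin d)) × ℝ) := Metric.ball_mem_nhds _ (by positivity)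
    refine Filter.eventually_of_mem hmem fun q hq => ?_
    rw [mem_ball, Prod.dist_eq, max_lt_iff] at hq
    obtain ⟨hq1, hq2⟩ := hq
    rw [Real.dist_eq] at hq2
    refine lt_of_lt_of_le hn (measure_mono fun y hy => ?_)
    rw [mem_closedBall] at hy
    rw [mem_ball]
    have h3 : dist y q.1 ≤ dist y x + dist x q.1 := dist_triangle _ _ _
    have h4 : dist x q.1 = dist q.1 x := dist_comm _ _
    have h5 : t - ε/2 < q.2 := by
      rcases abs_lt.1 hq2 with ⟨h6, _⟩; linarith
    calc dist y q.1 ≤ dist y x + dist q.1 x := by rw [← h4]; exact h3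
      _ < (t - ε) + ε/2 := by apply add_lt_add_of_le_of_lt hy hq1
      _ < q.2 := by linarith

lemma measurable_maxFun (P : Measure (EuclideanSpace ℝ (Fin d)))
    (α : ℕ → Finset (EuclideanSpace ℝ (Fin d))) (b : ℝ) :
    Measurable (maxFun P α b) := by
  unfold maxFun
  refine Measurable.iSup fun n => ?_
  by_cases hn : 1 ≤ n
  · simp only [hn, iSup_pos]
    have hc : Continuous fun x : EuclideanSpace ℝ (Fin d) =>
        ((x, b * qdist x (α n)) : (EuclideanSpace ℝ (Fin d)) × ℝ) :=
      continuous_id.prodMk (continuous_const.mul (Metric.continuous_infDist_pt _))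
    have h1 := (lsc_measure_ball volume).measurable.comp hc.measurable
    have h2 := (lsc_measure_ball P).measurable.comp hc.measurable
    exact Measurable.div h1 h2
  · simp only [hn, iSup_neg, not_false_iff]
    exact measurable_const

lemma besicovitch_weak (Pm ν : Measure (EuclideanSpace ℝ (Fin d)))
    [IsFiniteMeasure Pm] :
    ∃ N : ℕ, ∀ (c : ℝ≥0∞), c ≠ 0 → c ≠ ⊤ → ∀ (R : ℝ) (s : Set (EuclideanSpace ℝ (Fin d))),
      (∀ x ∈ s, ∃ t : ℝ, 0 < t ∧ t ≤ R ∧ c * Pm (Metric.ball x t) < ν (Metric.ball x t)) →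
      Pm s ≤ N * (c⁻¹ * ν Set.univ) := by
  obtain ⟨N, τ, hτ, hτN⟩ :=
    HasBesicovitchCovering.no_satelliteConfig (α := EuclideanSpace ℝ (Fin d))
  refine ⟨N, fun c hc0 hctop R s hs => ?_⟩
  choose t ht0 htR htc using fun x : s => hs x x.2
  set q : Besicovitch.BallPackage s (EuclideanSpace ℝ (Fin d)) :=
    ⟨Subtype.val, t, ht0, R, htR⟩ with hq
  obtain ⟨F, hFd, hFc⟩ := Besicovitch.exist_disjoint_covering_families hτ hτN q
  have key : ∀ i : Fin N,
      Pm (⋃ j ∈ F i, Metric.ball (q.c j) (q.r j)) ≤ c⁻¹ * ν Set.univ := by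
    intro i
    have hopen : IsOpen (⋃ j ∈ F i, Metric.ball (q.c j) (q.r j)) :=
      isOpen_biUnion fun _ _ => Metric.isOpen_ball
    rw [hopen.measure_eq_iSup_isCompact]
    refine iSup_le fun L => iSup_le fun hL => iSup_le fun hLc => ?_
    obtain ⟨G, hGsub, hGfin, hGcov⟩ :=
      hLc.elim_finite_subcover_image (fun (j : s) _ => Metric.isOpen_ball) hL
    have hGco : (⋃ j ∈ G, Metric.ball (q.c j) (q.r j)) =
        ⋃ j ∈ hGfin.toFinset, Metric.ball (q.c j) (q.r j) := by
      simp [Set.Finite.mem_toFinset]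
    calc Pm L ≤ Pm (⋃ j ∈ hGfin.toFinset, Metric.ball (q.c j) (q.r j)) := by
          rw [← hGco]; exact measure_mono hGcov
      _ ≤ ∑ j ∈ hGfin.toFinset, Pm (Metric.ball (q.c j) (q.r j)) :=
          measure_biUnion_finset_le _ _
      _ ≤ ∑ j ∈ hGfin.toFinset, c⁻¹ * ν (Metric.closedBall (q.c j) (q.r j)) := by
          refine Finset.sum_le_sum fun j _ => ?_
          have h1 : c * Pm (Metric.ball (q.c j) (q.r j))
              ≤ ν (Metric.closedBall (q.c j) (q.r j)) :=
            le_trans (htc j).le (measure_mono Metric.ball_subset_closedBall)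
          calc Pm (Metric.ball (q.c j) (q.r j))
              = c⁻¹ * (c * Pm (Metric.ball (q.c j) (q.r j))) := by
                rw [← mul_assoc, ENNReal.inv_mul_cancel hc0 hctop, one_mul]
            _ ≤ c⁻¹ * ν (Metric.closedBall (q.c j) (q.r j)) := mul_le_mul_right h1 _
      _ = c⁻¹ * ∑ j ∈ hGfin.toFinset, ν (Metric.closedBall (q.c j) (q.r j)) := by
          rw [Finset.mul_sum]
      _ = c⁻¹ * ν (⋃ j ∈ hGfin.toFinset, Metric.closedBall (q.c j) (q.r j)) := by
          rw [measure_biUnion_finset ((hFd i).subset (by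
            rw [Set.Finite.coe_toFinset]; exact hGsub))
            (fun j _ => measurableSet_closedBall)]
      _ ≤ c⁻¹ * ν Set.univ := mul_le_mul_right (measure_mono (Set.subset_univ _)) _
  calc Pm s ≤ Pm (⋃ i, ⋃ j ∈ F i, Metric.ball (q.c j) (q.r j)) := by
        refine measure_mono fun x hx => hFc ⟨⟨x, hx⟩, rfl⟩
    _ ≤ ∑ i : Fin N, Pm (⋃ j ∈ F i, Metric.ball (q.c j) (q.r j)) :=
        measure_iUnion_fintype_le _ _
    _ ≤ ∑ _i : Fin N, c⁻¹ * ν Set.univ := Finset.sum_le_sum fun i _ => key i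
    _ = N * (c⁻¹ * ν Set.univ) := by
        simp [Finset.sum_const, nsmul_eq_mul]

lemma lintegral_pow_lt_top' {X : Type*} [MeasurableSpace X] (Pm : Measure X)
    [IsFiniteMeasure Pm] (ψ : X → ℝ≥0∞) (hψ : Measurable ψ)
    (K : Set X) (hK : MeasurableSet K) (p : ℝ) (hp0 : 0 < p) (hp1 : p < 1)
    (A : ℝ≥0∞) (hA : A ≠ ⊤)
    (hweak : ∀ k : ℕ, Pm {x | x ∈ K ∧ (2:ℝ≥0∞)^k < ψ x} ≤ A / 2^k) :
    ∫⁻ x in K, ψ x ^ p ∂Pm < ⊤ := by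
  set B : ℕ → Set X := fun k => {x | x ∈ K ∧ (2:ℝ≥0∞)^k < ψ x ∧ ψ x ≤ 2^(k+1)} with hB
  set C0 : Set X := {x | x ∈ K ∧ ψ x ≤ 1} with hC0
  set C1 : Set X := {x | x ∈ K ∧ ψ x = ⊤} with hC1
  have hB_meas : ∀ k, MeasurableSet (B k) := fun k =>
    hK.inter ((hψ measurableSet_Ioi).inter (hψ measurableSet_Iic))
  have hC0_meas : MeasurableSet C0 := hK.inter (hψ measurableSet_Iic)
  have hcov : K ⊆ C0 ∪ (C1 ∪ ⋃ k, B k) := by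
    intro x hx
    rcases le_or_gt (ψ x) 1 with h1 | h1
    · exact Or.inl ⟨hx, h1⟩
    refine Or.inr ?_
    by_cases htop : ψ x = ⊤
    · exact Or.inl ⟨hx, htop⟩
    refine Or.inr ?_
    have hex : ∃ k : ℕ, ψ x ≤ 2^(k+1) := by
      obtain ⟨n, hn⟩ := ENNReal.exists_nat_gt htop
      refine ⟨n, hn.le.trans ?_⟩
      calc (n : ℝ≥0∞) ≤ ((2^(n+1) : ℕ) : ℝ≥0∞) := by
            exact_mod_cast (n.lt_two_pow_self).le.trans (Nat.pow_le_pow_right (by norm_num) (by omega))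
        _ = 2^(n+1) := by push_cast; ring
    set k0 := Nat.find hex with hk0
    refine mem_iUnion.2 ⟨k0, hx, ?_, Nat.find_spec hex⟩
    rcases Nat.eq_zero_or_pos k0 with h | h
    · rw [h]; simpa using h1
    · obtain ⟨m, hm⟩ := Nat.exists_eq_succ_of_ne_zero h.ne'
      have := Nat.find_min hex (m := m) (by omega)
      rw [hm]
      exact not_le.1 this
  set r : ℝ≥0∞ := 2 ^ (p - 1) with hr
  have h2top : (2:ℝ≥0∞) ≠ ⊤ := by norm_num
  have h20 : (2:ℝ≥0∞) ≠ 0 := by norm_num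
  have hBk : ∀ k, ∫⁻ x in B k, ψ x ^ p ∂Pm ≤ A * 2^(p:ℝ) * r^k := by
    intro k
    have hb : ∫⁻ x in B k, ψ x ^ p ∂Pm ≤ (2:ℝ≥0∞) ^ (((k:ℝ)+1)*p) * Pm (B k) := by
      rw [← setLIntegral_const (B k) ((2:ℝ≥0∞) ^ (((k:ℝ)+1)*p))]
      refine lintegral_mono_ae ?_
      filter_upwards [ae_restrict_mem (hB_meas k)] with x hx
      have h1 : ψ x ≤ 2 ^ (k+1) := hx.2.2
      calc ψ x ^ p ≤ ((2:ℝ≥0∞) ^ (k+1)) ^ p := ENNReal.rpow_le_rpow h1 hp0.le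
        _ = (2:ℝ≥0∞) ^ (((k:ℝ)+1)*p) := by
            rw [← ENNReal.rpow_natCast 2 (k+1), ← ENNReal.rpow_mul]
            push_cast; ring_nf
    have hPB : Pm (B k) ≤ A / 2^k := by
      refine le_trans (measure_mono ?_) (hweak k)
      intro x hx; exact ⟨hx.1, hx.2.1⟩
    calc ∫⁻ x in B k, ψ x ^ p ∂Pm ≤ (2:ℝ≥0∞) ^ (((k:ℝ)+1)*p) * (A / 2^k) :=
          le_trans hb (mul_le_mul_right hPB _)
      _ = A * 2^(p:ℝ) * r^k := by
          rw [div_eq_mul_inv, ← ENNReal.rpow_natCast 2 k, ← ENNReal.rpow_neg,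
            ← ENNReal.rpow_natCast r k, hr, ← ENNReal.rpow_mul,
            ← mul_assoc, mul_comm ((2:ℝ≥0∞) ^ (((k:ℝ)+1)*p)) A, mul_assoc, mul_assoc,
            ← ENNReal.rpow_add _ _ h20 h2top, ← ENNReal.rpow_add _ _ h20 h2top]
          ring_nf
  have hC1_null : Pm C1 = 0 := by
    by_contra h
    have h' : Pm C1 ≠ 0 := h
    have hfin : A / Pm C1 ≠ ⊤ := (ENNReal.div_lt_top hA h').ne
    obtain ⟨n, hn⟩ := ENNReal.exists_nat_gt hfin
    have hle : Pm C1 ≤ A / 2^n := by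
      refine le_trans (measure_mono ?_) (hweak n)
      intro x hx
      exact ⟨hx.1, by rw [hx.2]; exact ENNReal.pow_lt_top (by norm_num)⟩
    have h2n : (n:ℝ≥0∞) ≤ 2^n := by exact_mod_cast (n.lt_two_pow_self).le
    have hlt : A / Pm C1 < 2^n := lt_of_lt_of_le hn h2n
    have hAlt : A < 2^n * Pm C1 := by
      rw [ENNReal.div_lt_iff (Or.inl h') (Or.inl (measure_ne_top _ _))] at hlt
      exact hlt
    have : (2:ℝ≥0∞)^n * Pm C1 ≤ A := by
      rw [mul_comm]
      exact (ENNReal.le_div_iff_mul_le (Or.inl (pow_ne_zero n h20)) (Or.inl (by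
        exact ENNReal.pow_ne_top h2top))).1 hle
    exact absurd this (not_le.2 hAlt)
  have hrlt1 : r < 1 := ENNReal.rpow_lt_one_of_one_lt_of_neg (by norm_num) (by linarith)
  calc ∫⁻ x in K, ψ x ^ p ∂Pm ≤ ∫⁻ x in C0 ∪ (C1 ∪ ⋃ k, B k), ψ x ^ p ∂Pm :=
        lintegral_mono_set hcov
    _ ≤ ∫⁻ x in C0, ψ x ^ p ∂Pm + (∫⁻ x in C1, ψ x ^ p ∂Pm + ∫⁻ x in ⋃ k, B k, ψ x ^ p ∂Pm) :=
        le_trans (lintegral_union_le _ _ _) (by gcongr; exact lintegral_union_le _ _ _)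
    _ < ⊤ := by
        have h0 : ∫⁻ x in C0, ψ x ^ p ∂Pm ≤ Pm Set.univ := by
          calc ∫⁻ x in C0, ψ x ^ p ∂Pm ≤ ∫⁻ _x in C0, 1 ∂Pm := by
                refine lintegral_mono_ae ?_
                filter_upwards [ae_restrict_mem hC0_meas] with x hx
                exact ENNReal.rpow_le_one hx.2 hp0.le
            _ = Pm C0 := by rw [setLIntegral_const, one_mul]
            _ ≤ Pm Set.univ := measure_mono (Set.subset_univ _)
        have h1 : ∫⁻ x in C1, ψ x ^ p ∂Pm = 0 := setLIntegral_measure_zero _ _ hC1_null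
        have h2 : ∫⁻ x in ⋃ k, B k, ψ x ^ p ∂Pm ≤ A * 2^(p:ℝ) * (1 - r)⁻¹ := by
          calc ∫⁻ x in ⋃ k, B k, ψ x ^ p ∂Pm ≤ ∑' k, ∫⁻ x in B k, ψ x ^ p ∂Pm :=
                lintegral_iUnion_le _ _
            _ ≤ ∑' k : ℕ, A * 2^(p:ℝ) * r^k := ENNReal.tsum_le_tsum hBk
            _ = A * 2^(p:ℝ) * (1 - r)⁻¹ := by
                rw [ENNReal.tsum_mul_left, ENNReal.tsum_geometric]
        have hfin2 : A * 2^(p:ℝ) * (1 - r)⁻¹ < ⊤ := by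
          refine ENNReal.mul_lt_top (ENNReal.mul_lt_top hA.lt_top ?_) ?_
          · exact (ENNReal.rpow_ne_top_of_nonneg hp0.le h2top).lt_top
          · rw [ENNReal.inv_lt_top]
            exact tsub_pos_of_lt hrlt1
        refine ENNReal.add_lt_top.2 ⟨lt_of_le_of_lt h0 (measure_lt_top _ _), ?_⟩
        rw [h1, zero_add]
        exact lt_of_le_of_lt h2 hfin2

lemma radius_bound (P : Measure (EuclideanSpace ℝ (Fin d)))
    [IsProbabilityMeasure P] (r : ℝ) (hr : 0 < r)
    (α : ℕ → Finset (EuclideanSpace ℝ (Fin d)))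
    (hne : ∀ n, 1 ≤ n → (α n).Nonempty)
    (hconv : Tendsto (fun n : ℕ => qerr P r (α n)) atTop (𝓝 0))
    (M : ℝ) :
    ∃ R : ℝ, 0 < R ∧ ∀ x ∈ Metric.ball (0 : EuclideanSpace ℝ (Fin d)) M,
      ∀ n, 1 ≤ n → qdist x (α n) ≤ R := by
  obtain ⟨R₀, hR₀⟩ : ∃ n : ℕ, (1:ℝ≥0∞)/2 < P (Metric.closedBall 0 n) := by
    have hdir : Directed (· ⊆ ·) fun n : ℕ =>
        Metric.closedBall (0 : EuclideanSpace ℝ (Fin d)) n := by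
      refine Monotone.directed_le fun n m hnm => Metric.closedBall_subset_closedBall ?_
      exact_mod_cast hnm
    have h1 : (1:ℝ≥0∞)/2 < ⨆ n : ℕ, P (Metric.closedBall 0 n) := by
      rw [← hdir.measure_iUnion, Metric.iUnion_closedBall_nat, measure_univ]
      exact ENNReal.half_lt_self one_ne_zero one_ne_top
    exact lt_iSup_iff.1 h1
  set ε₀ : ℝ≥0∞ := ENNReal.ofReal ((R₀:ℝ)+1) ^ r * (1/2) with hε₀
  have hε₀pos : 0 < ε₀ := by
    apply ENNReal.mul_pos
    · exact (ENNReal.rpow_pos (ENNReal.ofReal_pos.2 (by positivity)) ENNReal.ofReal_ne_top).ne'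
    · simp
  have hfar : ∀ n, 1 ≤ n → (∀ a ∈ α n, 2*(R₀:ℝ)+1 < ‖a‖) → ε₀ ≤ qerr P r (α n) := by
    intro n hn hall
    have hlow : ∀ x ∈ Metric.closedBall (0 : EuclideanSpace ℝ (Fin d)) R₀,
        ((R₀:ℝ)+1) ≤ qdist x (α n) := by
      intro x hx
      rw [mem_closedBall, dist_zero_right] at hx
      by_contra h
      push_neg at h
      rw [qdist] at h
      obtain ⟨a, ha, hda⟩ := (Metric.infDist_lt_iff
        (Finset.coe_nonempty.2 (hne n hn))).1 h
      have h2 : 2*(R₀:ℝ)+1 < ‖a‖ := hall a ha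
      have h3 : ‖a‖ - ‖x‖ ≤ dist x a := by
        rw [dist_eq_norm, norm_sub_rev]
        exact norm_sub_norm_le a x
      linarith
    calc ε₀ = ENNReal.ofReal ((R₀:ℝ)+1) ^ r * (1/2) := hε₀
      _ ≤ ENNReal.ofReal ((R₀:ℝ)+1) ^ r * P (Metric.closedBall 0 R₀) :=
          mul_le_mul_right hR₀.le _
      _ = ∫⁻ _x in Metric.closedBall (0 : EuclideanSpace ℝ (Fin d)) R₀,
            ENNReal.ofReal ((R₀:ℝ)+1) ^ r ∂P := by rw [setLIntegral_const]
      _ ≤ ∫⁻ x in Metric.closedBall (0 : EuclideanSpace ℝ (Fin d)) R₀,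
            ENNReal.ofReal (qdist x (α n)) ^ r ∂P := by
          refine lintegral_mono_ae ?_
          filter_upwards [ae_restrict_mem measurableSet_closedBall] with x hx
          exact ENNReal.rpow_le_rpow (ENNReal.ofReal_le_ofReal (hlow x hx)) hr.le
      _ ≤ qerr P r (α n) := setLIntegral_le_lintegral _ _
  have hev : ∀ᶠ n in atTop, qerr P r (α n) < ε₀ :=
    hconv.eventually (Iio_mem_nhds hε₀pos)
  obtain ⟨N₁, hN₁⟩ := eventually_atTop.1 hev
  set N := max N₁ 1 with hN
  set g : ℕ → ℝ := fun n => if h : (α n).Nonempty then ‖h.choose‖ else 0 with hg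
  have hg0 : ∀ n, 0 ≤ g n := by
    intro n; rw [hg]; dsimp only
    split <;> [exact norm_nonneg _; exact le_refl 0]
  set Bsum : ℝ := ∑ n ∈ Finset.range N, g n with hBsum
  have hBsum0 : 0 ≤ Bsum := Finset.sum_nonneg fun n _ => hg0 n
  refine ⟨|M| + (2*(R₀:ℝ)+1) + Bsum + 1, by positivity, ?_⟩
  intro x hx n hn
  rw [mem_ball, dist_zero_right] at hx
  have hxM : ‖x‖ ≤ |M| := le_trans hx.le (le_abs_self M)
  rcases lt_or_ge n N with hcase | hcase
  · have hnne := hne n hn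
    have hmem : (hnne.choose : EuclideanSpace ℝ (Fin d)) ∈ α n := hnne.choose_spec
    have hgn : g n = ‖hnne.choose‖ := by
      rw [hg]; dsimp only; rw [dif_pos hnne]
    have hq : qdist x (α n) ≤ dist x hnne.choose :=
      Metric.infDist_le_dist_of_mem (by exact_mod_cast hmem)
    have hd : dist x hnne.choose ≤ ‖x‖ + ‖hnne.choose‖ := by
      rw [dist_eq_norm]; exact norm_sub_le _ _
    have hgB : g n ≤ Bsum := Finset.single_le_sum (fun i _ => hg0 i)
      (Finset.mem_range.2 hcase)
    nlinarith [hg0 n]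
  · have hqe : qerr P r (α n) < ε₀ := hN₁ n (le_trans (le_max_left _ _) hcase)
    have hex : ∃ a ∈ α n, ‖a‖ ≤ 2*(R₀:ℝ)+1 := by
      by_contra hco
      push_neg at hco
      exact absurd (hfar n hn fun a ha => hco a ha) (not_le.2 hqe)
    obtain ⟨a, ha, hna⟩ := hex
    have hq : qdist x (α n) ≤ dist x a :=
      Metric.infDist_le_dist_of_mem (by exact_mod_cast ha)
    have hd : dist x a ≤ ‖x‖ + ‖a‖ := by rw [dist_eq_norm]; exact norm_sub_le _ _
    nlinarith

lemma map_homothety_volume (r : ℝ) (hr : r ≠ 0) (μ : EuclideanSpace ℝ (Fin d)) :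
    Measure.map (fun x => μ + r • (x - μ)) (volume : Measure (EuclideanSpace ℝ (Fin d)))
      = ENNReal.ofReal |(r ^ d)⁻¹| • volume := by
  have hg : Measurable fun z : EuclideanSpace ℝ (Fin d) => μ + z := measurable_const_add μ
  have hf : Measurable fun z : EuclideanSpace ℝ (Fin d) => r • z := measurable_const_smul r
  have hh : Measurable fun x : EuclideanSpace ℝ (Fin d) => x + -μ := measurable_add_const (-μ)
  have h1 : (fun x : EuclideanSpace ℝ (Fin d) => μ + r • (x - μ)) =
      ((fun z => μ + z) ∘ ((fun z : EuclideanSpace ℝ (Fin d)  => r • z) ∘ (fun x => x + -μ))) := by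
    funext x; simp [sub_eq_add_neg, Function.comp]
  rw [h1, ← Measure.map_map hg (hf.comp hh), ← Measure.map_map hf hh,
    map_add_right_eq_self volume (-μ), Measure.map_addHaar_smul volume hr,
    finrank_euclideanSpace_fin, Measure.map_smul, map_add_left_eq_self]

lemma quasiMP_homothety (r : ℝ) (hr : r ≠ 0) (μ : EuclideanSpace ℝ (Fin d)) :
    Measure.QuasiMeasurePreserving (fun x => μ + r • (x - μ))
      (volume : Measure (EuclideanSpace ℝ (Fin d))) volume := by
  refine ⟨(measurable_const_add μ).comp ((measurable_const_smul r).comp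
    (measurable_id.sub_const μ)) |>.comp measurable_id, ?_⟩
  rw [map_homothety_volume r hr μ]
  exact Measure.smul_absolutelyContinuous

lemma setLIntegral_Pdil (f : EuclideanSpace ℝ (Fin d) → ℝ) (hfm : Measurable f)
    (θ : ℝ) (hθ : 0 < θ) (μ : EuclideanSpace ℝ (Fin d))
    (K : Set (EuclideanSpace ℝ (Fin d))) (hK : MeasurableSet K)
    (g : EuclideanSpace ℝ (Fin d) → ℝ≥0∞) (hg : Measurable g) :
    ∫⁻ y in K, g y ∂(Pdil (volume.withDensity fun x => ENNReal.ofReal (f x)) θ μ)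
      = ENNReal.ofReal (θ^d) *
        ∫⁻ y in K, g y * ENNReal.ofReal (f (μ + θ • (y - μ))) ∂volume := by
  set T : EuclideanSpace ℝ (Fin d) → EuclideanSpace ℝ (Fin d) :=
    fun x => μ + θ⁻¹ • (x - μ) with hT
  set S : EuclideanSpace ℝ (Fin d) → EuclideanSpace ℝ (Fin d) :=
    fun y => μ + θ • (y - μ) with hS
  have hTm : Measurable T :=
    (measurable_const_add μ).comp ((measurable_const_smul θ⁻¹).comp
      (measurable_id.sub_const μ))
  have hST : ∀ x, S (T x) = x := by
    intro x
    simp only [hS, hT, add_sub_cancel_left, smul_smul, mul_inv_cancel₀ hθ.ne', one_smul]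
    abel
  set w : EuclideanSpace ℝ (Fin d) → ℝ≥0∞ := fun y => g y * ENNReal.ofReal (f (S y)) with hw
  have hwm : Measurable w := hg.mul ((ENNReal.measurable_ofReal.comp hfm).comp
    ((measurable_const_add μ).comp ((measurable_const_smul θ).comp
      (measurable_id.sub_const μ))))
  have hmapT : Measure.map T volume
      = ENNReal.ofReal (θ^d) • (volume : Measure (EuclideanSpace ℝ (Fin d))) := by
    rw [hT]
    rw [map_homothety_volume θ⁻¹ (inv_ne_zero hθ.ne') μ]
    congr 1
    rw [inv_pow, inv_inv, abs_of_pos (pow_pos hθ d)]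
  calc ∫⁻ y in K, g y ∂(Pdil (volume.withDensity fun x => ENNReal.ofReal (f x)) θ μ)
      = ∫⁻ x in T ⁻¹' K, g (T x) ∂(volume.withDensity fun x => ENNReal.ofReal (f x)) := by
        rw [Pdil]; exact setLIntegral_map hK hg hTm
    _ = ∫⁻ x in T ⁻¹' K, ((fun x => ENNReal.ofReal (f x)) * fun x => g (T x)) x ∂volume :=
        setLIntegral_withDensity_eq_setLIntegral_mul volume
          (ENNReal.measurable_ofReal.comp hfm) (hg.comp hTm) (hTm hK)
    _ = ∫⁻ x in T ⁻¹' K, w (T x) ∂volume := by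
        refine lintegral_congr fun x => ?_
        simp only [Pi.mul_apply, hw, hST x]
        ring
    _ = ∫⁻ y in K, w y ∂(Measure.map T volume) := (setLIntegral_map hK hwm hTm).symm
    _ = ENNReal.ofReal (θ^d) * ∫⁻ y in K, w y ∂volume := by
        rw [hmapT, Measure.restrict_smul, lintegral_smul_measure, smul_eq_mul]

end AuxLemmas

/-- **Lemma 3.2 (a).**
Let `P = f·λ_d` with `∫ |x|^r dP < ∞`, let `(α_n)` be finite codebooks with
`∫ d(x,α_n)^r dP → 0`, and let `(θ,μ)` be `P`-admissible satisfying (H1).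
Then for every `p ∈ (0,1)` and every `b > 0`, `ψ_b^p` is locally
`P_{θ,μ}`-integrable. -/
theorem stmt_3 {d : ℕ} (hd : 1 ≤ d)
    (f : EuclideanSpace ℝ (Fin d) → ℝ) (hf0 : ∀ x, 0 ≤ f x) (hfm : Measurable f)
    (P : Measure (EuclideanSpace ℝ (Fin d))) [IsProbabilityMeasure P]
    (hP : P = volume.withDensity fun x => ENNReal.ofReal (f x))
    (r : ℝ) (hr : 0 < r)
    (hmom : (∫⁻ x, ENNReal.ofReal ‖x‖ ^ r ∂P) ≠ ⊤)
    (α : ℕ → Finset (EuclideanSpace ℝ (Fin d)))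
    (hne : ∀ n, 1 ≤ n → (α n).Nonempty)
    (hconv : Tendsto (fun n : ℕ => qerr P r (α n)) atTop (𝓝 0))
    (θ : ℝ) (hθ : 0 < θ) (μ : EuclideanSpace ℝ (Fin d))
    (hadm : Admissible f θ μ) (h1 : H1 f θ μ)
    (p : ℝ) (hp : p ∈ Ioo (0 : ℝ) 1) (b : ℝ) (hb : 0 < b) :
    ∀ K : Set (EuclideanSpace ℝ (Fin d)), IsCompact K →
      (∫⁻ x in K, maxFun P α b x ^ p ∂(Pdil P θ μ)) < ⊤ := by
  intro K hK
  have hKm : MeasurableSet K := hK.isClosed.measurableSet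
  set ψ : EuclideanSpace ℝ (Fin d) → ℝ≥0∞ := maxFun P α b with hψdef
  have hψ : Measurable ψ := measurable_maxFun P α b
  set g : EuclideanSpace ℝ (Fin d) → ℝ≥0∞ := fun x => ψ x ^ p with hgdef
  have hg : Measurable g := hψ.pow_const p
  obtain ⟨M, hM0, hKM⟩ := hK.isBounded.subset_ball_lt 0 0
  -- change of variables
  have hid := setLIntegral_Pdil f hfm θ hθ μ K hKm g hg
  rw [← hP] at hid
  -- a.e. comparison of densities on K
  obtain ⟨C, hC⟩ := h1 M hM0
  set C' := max C 0 with hC'def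
  have hC'0 : (0:ℝ) ≤ C' := le_max_right _ _
  have hadm' : ∀ᵐ y ∂(volume : Measure (EuclideanSpace ℝ (Fin d))),
      0 < f (μ + θ • (y - μ)) → 0 < f y := by
    have hq := quasiMP_homothety θ hθ.ne' μ
    have h2 := hq.ae hadm
    filter_upwards [h2] with y hy hpos
    have h3 := hy hpos
    rwa [show μ + θ⁻¹ • ((μ + θ • (y - μ)) - μ) = y by
      simp only [add_sub_cancel_left, smul_smul, inv_mul_cancel₀ hθ.ne', one_smul]
      abel] at h3
  have hcomp : ∀ᵐ y ∂((volume : Measure (EuclideanSpace ℝ (Fin d))).restrict K),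
      ENNReal.ofReal (f (μ + θ • (y - μ))) ≤ ENNReal.ofReal C' * ENNReal.ofReal (f y) := by
    filter_upwards [ae_restrict_of_ae hadm', ae_restrict_mem hKm] with y hy hyK
    by_cases hfy : 0 < f y
    · have hyb : y ∈ Metric.ball (0 : EuclideanSpace ℝ (Fin d)) M := hKM hyK
      have h2 := hC y hyb hfy
      rw [div_le_iff₀ hfy] at h2
      have h3 : f (μ + θ • (y - μ)) ≤ C' * f y :=
        h2.trans (mul_le_mul_of_nonneg_right (le_max_left _ _) hfy.le)
      rw [← ENNReal.ofReal_mul hC'0]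
      exact ENNReal.ofReal_le_ofReal h3
    · have hn : ¬ 0 < f (μ + θ • (y - μ)) := fun hpos => hfy (hy hpos)
      have h4 : f (μ + θ • (y - μ)) = 0 := le_antisymm (not_lt.1 hn) (hf0 _)
      simp [h4]
  have hPg : ∫⁻ y in K, g y ∂P = ∫⁻ y in K, g y * ENNReal.ofReal (f y) ∂volume := by
    rw [hP, setLIntegral_withDensity_eq_setLIntegral_mul volume
      hfm.ennreal_ofReal hg hKm]
    exact lintegral_congr fun y => mul_comm _ _
  have hred : ∫⁻ x in K, g x ∂(Pdil P θ μ)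
      ≤ ENNReal.ofReal (θ^d) * (ENNReal.ofReal C' * ∫⁻ x in K, g x ∂P) := by
    rw [hid]
    refine mul_le_mul_right ?_ _
    calc ∫⁻ y in K, g y * ENNReal.ofReal (f (μ + θ • (y - μ))) ∂volume
        ≤ ∫⁻ y in K, ENNReal.ofReal C' * (g y * ENNReal.ofReal (f y)) ∂volume := by
          refine lintegral_mono_ae ?_
          filter_upwards [hcomp] with y hy
          calc g y * ENNReal.ofReal (f (μ + θ • (y - μ)))
              ≤ g y * (ENNReal.ofReal C' * ENNReal.ofReal (f y)) := mul_le_mul_right hy _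
            _ = ENNReal.ofReal C' * (g y * ENNReal.ofReal (f y)) := by ring
      _ = ENNReal.ofReal C' * ∫⁻ y in K, g y * ENNReal.ofReal (f y) ∂volume :=
          lintegral_const_mul _ (hg.mul (ENNReal.measurable_ofReal.comp hfm))
      _ = ENNReal.ofReal C' * ∫⁻ y in K, g y ∂P := by rw [hPg]
  -- main estimate for the P-integral
  obtain ⟨R, hR0, hRq⟩ := radius_bound P r hr α hne hconv M
  set ρ : ℝ := M + b * R with hρdef
  set ν : Measure (EuclideanSpace ℝ (Fin d)) :=
    volume.restrict (Metric.closedBall (0 : EuclideanSpace ℝ (Fin d)) ρ) with hνdef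
  haveI hνfin : IsFiniteMeasure ν :=
    ⟨by rw [Measure.restrict_apply_univ]; exact measure_closedBall_lt_top⟩
  obtain ⟨N, hN⟩ := besicovitch_weak P ν
  have hweak : ∀ k : ℕ, P {x | x ∈ K ∧ (2:ℝ≥0∞)^k < ψ x} ≤ ((N:ℝ≥0∞) * ν Set.univ) / 2^k := by
    intro k
    have h2k0 : ((2:ℝ≥0∞)^k) ≠ 0 := pow_ne_zero k (by norm_num)
    have h2kt : ((2:ℝ≥0∞)^k) ≠ ⊤ := ENNReal.pow_ne_top (by norm_num)
    have hcond : ∀ x ∈ {x | x ∈ K ∧ (2:ℝ≥0∞)^k < ψ x}, ∃ t : ℝ, 0 < t ∧ t ≤ b * R ∧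
        (2:ℝ≥0∞)^k * P (Metric.ball x t) < ν (Metric.ball x t) := by
      rintro x ⟨hxK, hxψ⟩
      rw [hψdef] at hxψ
      unfold maxFun at hxψ
      obtain ⟨n, hn⟩ := lt_iSup_iff.1 hxψ
      obtain ⟨hn1, hlt⟩ := lt_iSup_iff.1 hn
      set t := b * qdist x (α n) with htdef
      have ht0 : 0 < t := by
        by_contra hcon
        push_neg at hcon
        rw [Metric.ball_eq_empty.2 hcon] at hlt
        simp at hlt
      have hxb : x ∈ Metric.ball (0 : EuclideanSpace ℝ (Fin d)) M := hKM hxK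
      have htR : t ≤ b * R := mul_le_mul_of_nonneg_left (hRq x hxb n hn1) hb.le
      refine ⟨t, ht0, htR, ?_⟩
      have hPfin : P (Metric.ball x t) ≠ ⊤ := measure_ne_top _ _
      have h1 : (2:ℝ≥0∞)^k * P (Metric.ball x t) < volume (Metric.ball x t) :=
        (ENNReal.lt_div_iff_mul_lt (Or.inr h2kt) (Or.inl hPfin)).1 hlt
      have hsub : Metric.ball x t ⊆ Metric.closedBall (0 : EuclideanSpace ℝ (Fin d)) ρ := by
        intro y hy
        rw [mem_closedBall, dist_zero_right]
        have hyx : dist y x < t := mem_ball.1 hy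
        have hx0 : ‖x‖ < M := by rwa [mem_ball, dist_zero_right] at hxb
        have htri : ‖y‖ ≤ dist y x + ‖x‖ := by
          simpa [dist_zero_right] using dist_triangle y x 0
        have hρ' : ρ = M + b * R := hρdef
        linarith
      have hνball : ν (Metric.ball x t) = volume (Metric.ball x t) := by
        rw [hνdef, Measure.restrict_apply' measurableSet_closedBall,
          Set.inter_eq_self_of_subset_left hsub]
      rw [hνball]
      exact h1
    calc P {x | x ∈ K ∧ (2:ℝ≥0∞)^k < ψ x}
        ≤ (N:ℝ≥0∞) * (((2:ℝ≥0∞)^k)⁻¹ * ν Set.univ) := hN (2^k) h2k0 h2kt (b*R) _ hcond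
      _ = ((N:ℝ≥0∞) * ν Set.univ) / 2^k := by
          rw [div_eq_mul_inv]; ring
  have hmain : ∫⁻ x in K, g x ∂P < ⊤ := by
    refine lintegral_pow_lt_top' P ψ hψ K hKm p hp.1 hp.2 ((N:ℝ≥0∞) * ν Set.univ) ?_ hweak
    exact ENNReal.mul_ne_top (ENNReal.natCast_ne_top N) (measure_ne_top ν _)
  calc ∫⁻ x in K, maxFun P α b x ^ p ∂(Pdil P θ μ) = ∫⁻ x in K, g x ∂(Pdil P θ μ) := rfl
    _ ≤ ENNReal.ofReal (θ^d) * (ENNReal.ofReal C' * ∫⁻ x in K, g x ∂P) := hred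
    _ < ⊤ := ENNReal.mul_lt_top ENNReal.ofReal_lt_top
        (ENNReal.mul_lt_top ENNReal.ofReal_lt_top hmain)
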